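/- The volume of the optimal ball for the S²×R space group 8.I.1 satisfies 0.696 < V(arccos(√((5+√5)/10))) < 0.697 (the paper's value is Vol(B(R^{opt})) ≈ 0.6962). -/

import Mathlib

open Real

/-- `V ρ` is the volume of the geodesic ball of radius `ρ` in `S²×R` geometry
(valid for `ρ ∈ [0, π)`). -/
noncomputable def V (ρ : ℝ) : ℝ :=
  2 * π * ∫ τ in (0 : ℝ)..ρ, ∫ v in (-(π/2))..(π/2), τ * Real.sin (τ * Real.cos v)

/-- Generic comparison lemma via derivatives on `[0, ∞)`. -/
lemma le_of_deriv_le (f g f' g' : ℝ → ℝ) (hf : ∀ x, HasDerivAt f (f' x) x)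
    (hg : ∀ x, HasDerivAt g (g' x) x) (h0 : f 0 ≤ g 0)
    (hd : ∀ x, 0 ≤ x → f' x ≤ g' x) {x : ℝ} (hx : 0 ≤ x) : f x ≤ g x := by
  have hmono : MonotoneOn (fun y => g y - f y) (Set.Ici 0) := by
    apply monotoneOn_of_deriv_nonneg (convex_Ici 0)
    · exact (Continuous.continuousOn (by
        have : Differentiable ℝ (fun y => g y - f y) :=
          fun y => ((hg y).sub (hf y)).differentiableAt
        exact this.continuous))
    · intro y hy
      exact (((hg y).sub (hf y)).differentiableAt).differentiableWithinAt
    · intro y hy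
      rw [interior_Ici] at hy
      have : deriv (fun y => g y - f y) y = g' y - f' y := ((hg y).sub (hf y)).deriv
      rw [this]
      linarith [hd y hy.le]
  have h2 := hmono (Set.self_mem_Ici) (Set.mem_Ici.2 hx) hx
  simp only at h2
  linarith

lemma cos_ge2 {x : ℝ} (hx : 0 ≤ x) : 1 - x^2/2 ≤ Real.cos x := by
  apply le_of_deriv_le (fun x => 1 - x^2/2) Real.cos (fun x => -x) (fun x => -Real.sin x)
    (fun x => by
      simpa using ((hasDerivAt_pow 2 x).div_const 2).const_sub 1) -- derivative check
    (fun x => Real.hasDerivAt_cos x) (by norm_num)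
    (fun x hx => by simpa using Real.sin_le hx) hx

lemma sin_ge3 {x : ℝ} (hx : 0 ≤ x) : x - x^3/6 ≤ Real.sin x := by
  apply le_of_deriv_le (fun x => x - x^3/6) Real.sin
    (fun x => 1 - x^2/2) (fun x => Real.cos x)
    (fun x => by
      have h := (hasDerivAt_id x).sub ((hasDerivAt_pow 3 x).div_const 6)
      exact h.congr_deriv (by norm_num <;> ring))
    (fun x => Real.hasDerivAt_sin x) (by norm_num)
    (fun x hx => cos_ge2 hx) hx

lemma cos_le4 {x : ℝ} (hx : 0 ≤ x) : Real.cos x ≤ 1 - x^2/2 + x^4/24 := by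
  apply le_of_deriv_le Real.cos (fun x => 1 - x^2/2 + x^4/24)
    (fun x => -Real.sin x) (fun x => -(x - x^3/6))
    (fun x => Real.hasDerivAt_cos x)
    (fun x => by
      have h := (((hasDerivAt_pow 2 x).div_const 2).const_sub 1).add
        ((hasDerivAt_pow 4 x).div_const 24)
      exact h.congr_deriv (by norm_num <;> ring))
    (by norm_num)
    (fun x hx => by linarith [sin_ge3 hx]) hx

lemma sin_le5 {x : ℝ} (hx : 0 ≤ x) : Real.sin x ≤ x - x^3/6 + x^5/120 := by
  apply le_of_deriv_le Real.sin (fun x => x - x^3/6 + x^5/120)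
    (fun x => Real.cos x) (fun x => 1 - x^2/2 + x^4/24)
    (fun x => Real.hasDerivAt_sin x)
    (fun x => by
      have h := ((hasDerivAt_id x).sub ((hasDerivAt_pow 3 x).div_const 6)).add
        ((hasDerivAt_pow 5 x).div_const 120)
      exact h.congr_deriv (by norm_num <;> ring))
    (by norm_num)
    (fun x hx => cos_le4 hx) hx

lemma cos_ge6 {x : ℝ} (hx : 0 ≤ x) : 1 - x^2/2 + x^4/24 - x^6/720 ≤ Real.cos x := by
  apply le_of_deriv_le (fun x => 1 - x^2/2 + x^4/24 - x^6/720) Real.cos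
    (fun x => -(x - x^3/6 + x^5/120)) (fun x => -Real.sin x)
    (fun x => by
      have h := ((((hasDerivAt_pow 2 x).div_const 2).const_sub 1).add
        ((hasDerivAt_pow 4 x).div_const 24)).sub ((hasDerivAt_pow 6 x).div_const 720)
      exact h.congr_deriv (by norm_num <;> ring))
    (fun x => Real.hasDerivAt_cos x) (by norm_num)
    (fun x hx => by linarith [sin_le5 hx]) hx

lemma sin_ge7 {x : ℝ} (hx : 0 ≤ x) : x - x^3/6 + x^5/120 - x^7/5040 ≤ Real.sin x := by
  apply le_of_deriv_le (fun x => x - x^3/6 + x^5/120 - x^7/5040) Real.sin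
    (fun x => 1 - x^2/2 + x^4/24 - x^6/720) (fun x => Real.cos x)
    (fun x => by
      have h := (((hasDerivAt_id x).sub ((hasDerivAt_pow 3 x).div_const 6)).add
        ((hasDerivAt_pow 5 x).div_const 120)).sub ((hasDerivAt_pow 7 x).div_const 5040)
      exact h.congr_deriv (by norm_num <;> ring))
    (fun x => Real.hasDerivAt_sin x) (by norm_num)
    (fun x hx => cos_ge6 hx) hx

lemma cos_le8 {x : ℝ} (hx : 0 ≤ x) :
    Real.cos x ≤ 1 - x^2/2 + x^4/24 - x^6/720 + x^8/40320 := by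
  apply le_of_deriv_le Real.cos (fun x => 1 - x^2/2 + x^4/24 - x^6/720 + x^8/40320)
    (fun x => -Real.sin x) (fun x => -(x - x^3/6 + x^5/120 - x^7/5040))
    (fun x => Real.hasDerivAt_cos x)
    (fun x => by
      have h := (((((hasDerivAt_pow 2 x).div_const 2).const_sub 1).add
        ((hasDerivAt_pow 4 x).div_const 24)).sub ((hasDerivAt_pow 6 x).div_const 720)).add
        ((hasDerivAt_pow 8 x).div_const 40320)
      exact h.congr_deriv (by norm_num <;> ring))
    (by norm_num)
    (fun x hx => by linarith [sin_ge7 hx]) hx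

/-- Integral of an odd cosine polynomial over `[-π/2, π/2]`. -/
lemma integral_cos_poly (a b c d : ℝ) :
    ∫ v in (-(π/2))..(π/2),
      (a * Real.cos v + b * Real.cos v ^ 3 + c * Real.cos v ^ 5 + d * Real.cos v ^ 7)
      = 2*a + (4/3)*b + (16/15)*c + (32/35)*d := by
  have key : ∀ v : ℝ, HasDerivAt
      (fun v => a * Real.sin v + b * (Real.sin v - Real.sin v ^ 3 / 3)
        + c * (Real.sin v - 2 * Real.sin v ^ 3 / 3 + Real.sin v ^ 5 / 5)
        + d * (Real.sin v - Real.sin v ^ 3 + 3 * Real.sin v ^ 5 / 5 - Real.sin v ^ 7 / 7))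
      (a * Real.cos v + b * Real.cos v ^ 3 + c * Real.cos v ^ 5 + d * Real.cos v ^ 7) v := by
    intro v
    have h := Real.hasDerivAt_sin v
    have H := (((h.const_mul a).add
      ((h.sub ((h.pow 3).div_const 3)).const_mul b)).add
      (((h.sub (((h.pow 3).const_mul 2).div_const 3)).add ((h.pow 5).div_const 5)).const_mul c)).add
      ((((h.sub (h.pow 3)).add (((h.pow 5).const_mul 3).div_const 5)).sub
        ((h.pow 7).div_const 7)).const_mul d)
    refine H.congr_deriv ?_
    symm
    have hp := Real.sin_sq_add_cos_sq v
    push_cast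
    linear_combination (b * Real.cos v
      + c * Real.cos v * (Real.cos v ^ 2 + 1 - Real.sin v ^ 2)
      + d * Real.cos v * (Real.cos v ^ 4 + Real.cos v ^ 2 * (1 - Real.sin v ^ 2)
          + (1 - Real.sin v ^ 2) ^ 2)) * hp
  rw [intervalIntegral.integral_eq_sub_of_hasDerivAt (fun v _ => key v)
    (Continuous.intervalIntegrable (by fun_prop) _ _)]
  simp [Real.sin_pi_div_two]
  ring

/-- Integral of an even polynomial from `0` to `r`. -/
lemma integral_tau_poly (a b c d r : ℝ) :
    ∫ τ in (0:ℝ)..r, (a*τ^2 + b*τ^4 + c*τ^6 + d*τ^8)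
      = a*r^3/3 + b*r^5/5 + c*r^7/7 + d*r^9/9 := by
  have key : ∀ τ : ℝ, HasDerivAt
      (fun τ => a*τ^3/3 + b*τ^5/5 + c*τ^7/7 + d*τ^9/9)
      (a*τ^2 + b*τ^4 + c*τ^6 + d*τ^8) τ := by
    intro τ
    have H := (((((hasDerivAt_pow 3 τ).const_mul a).div_const 3).add
      ((((hasDerivAt_pow 5 τ).const_mul b).div_const 5))).add
      ((((hasDerivAt_pow 7 τ).const_mul c)).div_const 7)).add
      ((((hasDerivAt_pow 9 τ).const_mul d)).div_const 9)
    refine H.congr_deriv ?_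
    ring_nf
  rw [intervalIntegral.integral_eq_sub_of_hasDerivAt (fun τ _ => key τ)
    (Continuous.intervalIntegrable (by fun_prop) _ _)]
  ring

lemma sqrt5_lt : Real.sqrt 5 < 2.236068 := by
  rw [show (2.236068:ℝ) = 2.236068 from rfl, Real.sqrt_lt' (by norm_num)]; norm_num

lemma lt_sqrt5 : (2.2360679:ℝ) < Real.sqrt 5 := by
  rw [show (5:ℝ) = 5 from rfl, Real.lt_sqrt (by norm_num)]; norm_num

lemma rho_mem : (0.55357:ℝ) < Real.arccos (Real.sqrt ((5 + Real.sqrt 5) / 10)) ∧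
    Real.arccos (Real.sqrt ((5 + Real.sqrt 5) / 10)) < 0.55358 := by
  set c := Real.sqrt ((5 + Real.sqrt 5) / 10) with hc
  have hc0 : 0 ≤ c := Real.sqrt_nonneg _
  have hc1 : c ≤ 1 := by
    rw [hc, show (1:ℝ) = Real.sqrt 1 by simp]
    apply Real.sqrt_le_sqrt
    nlinarith [sqrt5_lt]
  have hmemc : c ∈ Set.Icc (-1:ℝ) 1 := ⟨by linarith, hc1⟩
  constructor
  · -- c < cos 0.55357
    have hcosl : (0.85065288:ℝ) ≤ Real.cos 0.55357 := by
      have := cos_ge6 (x := 0.55357) (by norm_num)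
      norm_num at this ⊢
      linarith
    have hlt : c < Real.cos 0.55357 := by
      have : c < 0.85065288 := by
        rw [hc, Real.sqrt_lt' (by norm_num)]
        nlinarith [sqrt5_lt]
      linarith
    have hmem2 : Real.cos 0.55357 ∈ Set.Icc (-1:ℝ) 1 :=
      ⟨Real.neg_one_le_cos _, Real.cos_le_one _⟩
    have := Real.strictAntiOn_arccos hmemc hmem2 hlt
    rwa [Real.arccos_cos (by norm_num) (by linarith [Real.pi_gt_three])] at this
  · -- cos 0.55358 < c
    have hcosu : Real.cos 0.55358 ≤ (0.85064785:ℝ) := by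
      have := cos_le8 (x := 0.55358) (by norm_num)
      norm_num at this ⊢
      linarith
    have hlt : Real.cos 0.55358 < c := by
      have : (0.85064785:ℝ) < c := by
        rw [hc, Real.lt_sqrt (by norm_num)]
        nlinarith [lt_sqrt5]
      linarith
    have hmem2 : Real.cos 0.55358 ∈ Set.Icc (-1:ℝ) 1 :=
      ⟨Real.neg_one_le_cos _, Real.cos_le_one _⟩
    have := Real.strictAntiOn_arccos hmem2 hmemc hlt
    rwa [Real.arccos_cos (by norm_num) (by linarith [Real.pi_gt_three])] at this

/-- The volume of the optimal ball for the `S²×R` space group `8.I.1`, of radius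
`R^{opt} = arccos √((5+√5)/10)`, satisfies `0.696 < V(R^{opt}) < 0.697`
(the paper's value is `≈ 0.6962`). -/
theorem optimal_ball_volume_8I1_bounds :
    0.696 < V (Real.arccos (Real.sqrt ((5 + Real.sqrt 5) / 10))) ∧
    V (Real.arccos (Real.sqrt ((5 + Real.sqrt 5) / 10))) < 0.697 := by
  set ρ := Real.arccos (Real.sqrt ((5 + Real.sqrt 5) / 10)) with hρ
  obtain ⟨hr1, hr2⟩ := rho_mem
  have hρ0 : (0:ℝ) ≤ ρ := by linarith
  -- the inner integral, as a function of τ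
  set g : ℝ → ℝ := fun τ => ∫ v in (-(π/2))..(π/2), τ * Real.sin (τ * Real.cos v) with hg
  have hgcont : Continuous g := by
    exact intervalIntegral.continuous_parametric_intervalIntegral_of_continuous'
      (μ := MeasureTheory.volume) (f := fun (τ v : ℝ) => τ * Real.sin (τ * Real.cos v))
      (by fun_prop) (-(π/2)) (π/2)
  -- pointwise bounds for the inner integral
  have hinner_low : ∀ τ ∈ Set.Icc (0:ℝ) ρ,
      2*τ^2 - 2*τ^4/9 + 2*τ^6/225 - 2*τ^8/11025 ≤ g τ := by
    intro τ hτ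
    obtain ⟨hτ0, hτρ⟩ := hτ
    have hmono : ∀ v ∈ Set.Icc (-(π/2)) (π/2),
        (τ^2 * Real.cos v + (-(τ^4/6)) * Real.cos v ^ 3 + (τ^6/120) * Real.cos v ^ 5
          + (-(τ^8/5040)) * Real.cos v ^ 7) ≤ τ * Real.sin (τ * Real.cos v) := by
      intro v hv
      have hcv : 0 ≤ Real.cos v := Real.cos_nonneg_of_mem_Icc hv
      have hx : 0 ≤ τ * Real.cos v := mul_nonneg hτ0 hcv
      have hs := sin_ge7 hx
      have := mul_le_mul_of_nonneg_left hs hτ0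
      calc τ^2 * Real.cos v + (-(τ^4/6)) * Real.cos v ^ 3 + (τ^6/120) * Real.cos v ^ 5
            + (-(τ^8/5040)) * Real.cos v ^ 7
          = τ * ((τ * Real.cos v) - (τ * Real.cos v)^3/6 + (τ * Real.cos v)^5/120
              - (τ * Real.cos v)^7/5040) := by ring
        _ ≤ τ * Real.sin (τ * Real.cos v) := this
    have hint := intervalIntegral.integral_mono_on (μ := MeasureTheory.volume) (by linarith [Real.pi_pos])
      (Continuous.intervalIntegrable (by fun_prop) _ _)
      (Continuous.intervalIntegrable (by fun_prop) _ _) hmono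
    rw [integral_cos_poly] at hint
    calc 2*τ^2 - 2*τ^4/9 + 2*τ^6/225 - 2*τ^8/11025
        = 2*(τ^2) + (4/3)*(-(τ^4/6)) + (16/15)*(τ^6/120) + (32/35)*(-(τ^8/5040)) := by ring
      _ ≤ g τ := hint
  have hinner_up : ∀ τ ∈ Set.Icc (0:ℝ) ρ,
      g τ ≤ 2*τ^2 - 2*τ^4/9 + 2*τ^6/225 := by
    intro τ hτ
    obtain ⟨hτ0, hτρ⟩ := hτ
    have hmono : ∀ v ∈ Set.Icc (-(π/2)) (π/2),
        τ * Real.sin (τ * Real.cos v) ≤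
        (τ^2 * Real.cos v + (-(τ^4/6)) * Real.cos v ^ 3 + (τ^6/120) * Real.cos v ^ 5
          + (0:ℝ) * Real.cos v ^ 7) := by
      intro v hv
      have hcv : 0 ≤ Real.cos v := Real.cos_nonneg_of_mem_Icc hv
      have hx : 0 ≤ τ * Real.cos v := mul_nonneg hτ0 hcv
      have hs := sin_le5 hx
      have := mul_le_mul_of_nonneg_left hs hτ0
      calc τ * Real.sin (τ * Real.cos v)
          ≤ τ * ((τ * Real.cos v) - (τ * Real.cos v)^3/6 + (τ * Real.cos v)^5/120) := this
        _ = τ^2 * Real.cos v + (-(τ^4/6)) * Real.cos v ^ 3 + (τ^6/120) * Real.cos v ^ 5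
            + (0:ℝ) * Real.cos v ^ 7 := by ring
    have hint := intervalIntegral.integral_mono_on (μ := MeasureTheory.volume) (by linarith [Real.pi_pos])
      (Continuous.intervalIntegrable (by fun_prop) _ _)
      (Continuous.intervalIntegrable (by fun_prop) _ _) hmono
    rw [integral_cos_poly] at hint
    calc g τ ≤ 2*(τ^2) + (4/3)*(-(τ^4/6)) + (16/15)*(τ^6/120) + (32/35)*(0:ℝ) := hint
      _ = 2*τ^2 - 2*τ^4/9 + 2*τ^6/225 := by ring
  -- outer integral bounds
  have hpc1 : Continuous (fun τ:ℝ => 2*τ^2 + (-(2/9))*τ^4 + (2/225)*τ^6 + (-(2/11025))*τ^8) := by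
    fun_prop
  have hpc2 : Continuous (fun τ:ℝ => 2*τ^2 + (-(2/9))*τ^4 + (2/225)*τ^6 + (0:ℝ)*τ^8) := by
    fun_prop
  have houter_low : 2*ρ^3/3 - (2/9)*ρ^5/5 + (2/225)*ρ^7/7 - (2/11025)*ρ^9/9
      ≤ ∫ τ in (0:ℝ)..ρ, g τ := by
    have h := intervalIntegral.integral_mono_on (μ := MeasureTheory.volume) hρ0
      (hpc1.intervalIntegrable _ _)
      (hgcont.intervalIntegrable _ _)
      (fun τ hτ => by
        have := hinner_low τ hτ
        calc 2*τ^2 + (-(2/9))*τ^4 + (2/225)*τ^6 + (-(2/11025))*τ^8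
            = 2*τ^2 - 2*τ^4/9 + 2*τ^6/225 - 2*τ^8/11025 := by ring
          _ ≤ g τ := this)
    rw [integral_tau_poly] at h
    calc 2*ρ^3/3 - (2/9)*ρ^5/5 + (2/225)*ρ^7/7 - (2/11025)*ρ^9/9
        = 2*ρ^3/3 + (-(2/9))*ρ^5/5 + (2/225)*ρ^7/7 + (-(2/11025))*ρ^9/9 := by ring
      _ ≤ _ := h
  have houter_up : (∫ τ in (0:ℝ)..ρ, g τ)
      ≤ 2*ρ^3/3 - (2/9)*ρ^5/5 + (2/225)*ρ^7/7 := by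
    have h := intervalIntegral.integral_mono_on (μ := MeasureTheory.volume) hρ0
      (hgcont.intervalIntegrable _ _)
      (hpc2.intervalIntegrable _ _)
      (fun τ hτ => by
        have := hinner_up τ hτ
        calc g τ ≤ 2*τ^2 - 2*τ^4/9 + 2*τ^6/225 := this
          _ = 2*τ^2 + (-(2/9))*τ^4 + (2/225)*τ^6 + (0:ℝ)*τ^8 := by ring)
    rw [integral_tau_poly] at h
    calc (∫ τ in (0:ℝ)..ρ, g τ)
        ≤ 2*ρ^3/3 + (-(2/9))*ρ^5/5 + (2/225)*ρ^7/7 + (0:ℝ)*ρ^9/9 := h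
      _ = 2*ρ^3/3 - (2/9)*ρ^5/5 + (2/225)*ρ^7/7 := by ring
  -- power bounds from ρ ∈ (0.55357, 0.55358)
  have hp3 : (0.55357:ℝ)^3 ≤ ρ^3 := pow_le_pow_left₀ (by norm_num) hr1.le 3
  have hp5 : ρ^5 ≤ (0.55358:ℝ)^5 := pow_le_pow_left₀ hρ0 hr2.le 5
  have hp7 : (0.55357:ℝ)^7 ≤ ρ^7 := pow_le_pow_left₀ (by norm_num) hr1.le 7
  have hp9 : ρ^9 ≤ (0.55358:ℝ)^9 := pow_le_pow_left₀ hρ0 hr2.le 9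
  have hp5' : (0.55357:ℝ)^5 ≤ ρ^5 := pow_le_pow_left₀ (by norm_num) hr1.le 5
  have hp3' : ρ^3 ≤ (0.55358:ℝ)^3 := pow_le_pow_left₀ hρ0 hr2.le 3
  have hp7' : ρ^7 ≤ (0.55358:ℝ)^7 := pow_le_pow_left₀ hρ0 hr2.le 7
  have hVdef : V ρ = 2 * π * ∫ τ in (0:ℝ)..ρ, g τ := rfl
  have hπl := Real.pi_gt_d6
  have hπu := Real.pi_lt_d6
  have hIl : (0.110793:ℝ) ≤ ∫ τ in (0:ℝ)..ρ, g τ := by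
    refine le_trans ?_ houter_low
    nlinarith [hp3, hp5, hp7, hp9]
  have hIu : (∫ τ in (0:ℝ)..ρ, g τ) ≤ (0.1108066:ℝ) := by
    refine le_trans houter_up ?_
    nlinarith [hp3', hp5', hp7']
  constructor
  · rw [hVdef]; nlinarith [hIl, hπl]
  · rw [hVdef]; nlinarith [hIu, hπu, hIl]
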